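/- Björck orthogonalization step: for a matrix W with ‖I - W^T W‖₂ < 1, the iteration W ← W(I + (1/2)(I - W^T W)) converges to the nearest matrix with orthonormal columns; in particular, if W = UΣV^T is an SVD with all singular values in (0, √3), then each iterate has the same singular vectors and singular values σ ↦ σ(3 - σ²)/2, and the singular values converge to 1. -/

import Mathlib

open Matrix Filter

namespace Stmt16

/-- Action of one Björck orthogonalization step on a singular value. -/
noncomputable def g (σ : ℝ) : ℝ := σ * (3 - σ ^ 2) / 2

/-- The Björck–Bowie iteration `W ← W (I + ½(I - Wᵀ W))` started at `W`. -/
noncomputable def bjorck (m nn : ℕ) (W : Matrix (Fin m) (Fin nn) ℝ) :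
    ℕ → Matrix (Fin m) (Fin nn) ℝ
  | 0 => W
  | k + 1 =>
      bjorck m nn W k *
        (1 + (1 / 2 : ℝ) • (1 - (bjorck m nn W k)ᵀ * bjorck m nn W k))

lemma g_cont : Continuous g := by unfold g; continuity

lemma g_pos {x : ℝ} (h0 : 0 < x) (h3 : x ^ 2 < 3) : 0 < g x := by
  unfold g; exact div_pos (mul_pos h0 (by nlinarith)) two_pos

lemma g_le_one {x : ℝ} (h0 : 0 ≤ x) : g x ≤ 1 := by
  unfold g; nlinarith [sq_nonneg (x - 1)]

lemma le_g {x : ℝ} (h0 : 0 ≤ x) (h1 : x ≤ 1) : x ≤ g x := by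
  unfold g; nlinarith

lemma iter_mem {x : ℝ} (h0 : 0 < x) (h1 : x ≤ 1) (k : ℕ) :
    0 < g^[k] x ∧ g^[k] x ≤ 1 := by
  induction k with
  | zero => exact ⟨h0, h1⟩
  | succ n ih =>
      rw [Function.iterate_succ_apply']
      exact ⟨g_pos ih.1 (by nlinarith [ih.1, ih.2]), g_le_one ih.1.le⟩

lemma tendsto_iter_one {x : ℝ} (h0 : 0 < x) (h1 : x ≤ 1) :
    Tendsto (fun k => g^[k] x) atTop (nhds 1) := by
  have hmono : Monotone fun k => g^[k] x := by
    apply monotone_nat_of_le_succ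
    intro n
    rw [Function.iterate_succ_apply']
    exact le_g (iter_mem h0 h1 n).1.le (iter_mem h0 h1 n).2
  have hbdd : ∀ k, g^[k] x ≤ 1 := fun k => (iter_mem h0 h1 k).2
  rcases tendsto_of_monotone hmono with h | ⟨L, hL⟩
  · exfalso
    obtain ⟨k, hk⟩ := (h.eventually_gt_atTop 1).exists
    exact absurd (hbdd k) (not_le.2 hk)
  · have hL1 : L ≤ 1 := le_of_tendsto hL (Eventually.of_forall hbdd)
    have hL0 : x ≤ L := by
      apply le_of_tendsto_of_tendsto tendsto_const_nhds hL
      exact Eventually.of_forall fun k => by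
        simpa using hmono (Nat.zero_le k)
    have hfix : g L = L := by
      have h1' : Tendsto (fun k => g^[k+1] x) atTop (nhds L) :=
        hL.comp (tendsto_add_atTop_nat 1)
      have h2' : Tendsto (fun k => g (g^[k] x)) atTop (nhds (g L)) :=
        (g_cont.tendsto L).comp hL
      simp only [← Function.iterate_succ_apply'] at h2'
      exact tendsto_nhds_unique h2' h1'
    have : L = 1 := by unfold g at hfix; nlinarith
    rwa [this] at hL

lemma tendsto_iter_one' {x : ℝ} (h0 : 0 < x) (h3 : x < Real.sqrt 3) :
    Tendsto (fun k => g^[k] x) atTop (nhds 1) := by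
  have hx3 : x ^ 2 < 3 := by
    have := Real.sq_sqrt (by norm_num : (3:ℝ) ≥ 0)
    nlinarith [Real.sqrt_nonneg 3]
  have h1 : Tendsto (fun k => g^[k+1] x) atTop (nhds 1) := by
    simp only [Function.iterate_succ_apply]
    exact tendsto_iter_one (g_pos h0 hx3) (g_le_one h0.le)
  exact (tendsto_add_atTop_iff_nat 1).mp h1

lemma step_eq {m nn : ℕ} (U : Matrix (Fin m) (Fin nn) ℝ) (V : Matrix (Fin nn) (Fin nn) ℝ)
    (hU : Uᵀ * U = 1) (hV : Vᵀ * V = 1) (d : Fin nn → ℝ) :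
    (U * diagonal d * Vᵀ) *
        (1 + (1 / 2 : ℝ) • (1 - (U * diagonal d * Vᵀ)ᵀ * (U * diagonal d * Vᵀ)))
      = U * diagonal (fun i => g (d i)) * Vᵀ := by
  have hU' : ∀ X : Matrix (Fin nn) (Fin nn) ℝ, Uᵀ * (U * X) = X := fun X => by
    rw [← Matrix.mul_assoc, hU, Matrix.one_mul]
  have hV2 : ∀ X : Matrix (Fin nn) (Fin nn) ℝ, Vᵀ * (V * X) = X := fun X => by
    rw [← Matrix.mul_assoc, hV, Matrix.one_mul]
  have hAtA : (U * diagonal d * Vᵀ)ᵀ * (U * diagonal d * Vᵀ)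
      = V * (diagonal (fun i => d i * d i) * Vᵀ) := by
    simp only [transpose_mul, diagonal_transpose, transpose_transpose, Matrix.mul_assoc, hU']
    rw [← Matrix.mul_assoc (diagonal d), diagonal_mul_diagonal]
  have hcube : (U * diagonal d * Vᵀ) * (V * (diagonal (fun i => d i * d i) * Vᵀ))
      = U * diagonal (fun i => d i * (d i * d i)) * Vᵀ := by
    simp only [Matrix.mul_assoc, hV2]
    rw [← Matrix.mul_assoc (diagonal d), diagonal_mul_diagonal]
  rw [Matrix.mul_add, Matrix.mul_one, Matrix.mul_smul, Matrix.mul_sub, Matrix.mul_one, hAtA,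
    hcube]
  have hdiag : diagonal (fun i => g (d i))
      = diagonal d + (1/2 : ℝ) • (diagonal d - diagonal (fun i => d i * (d i * d i))) := by
    ext i j
    rcases eq_or_ne i j with rfl | h
    · simp [g, Matrix.diagonal_apply_eq]; ring
    · simp [Matrix.diagonal_apply_ne _ h]
  rw [hdiag]
  simp only [Matrix.mul_add, Matrix.add_mul, Matrix.mul_smul, Matrix.smul_mul,
    Matrix.mul_sub, Matrix.sub_mul]

lemma sum_sq_of_orth {m nn : ℕ} (A : Matrix (Fin m) (Fin nn) ℝ) (hA : Aᵀ * A = 1) :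
    ∑ i, ∑ j, A i j ^ 2 = (nn : ℝ) := by
  have : ∑ i, ∑ j, A i j ^ 2 = Matrix.trace (Aᵀ * A) := by
    rw [Finset.sum_comm]
    simp [Matrix.trace, Matrix.diag, Matrix.mul_apply, sq]
  rw [this, hA, Matrix.trace_one]
  simp

/-- Let `W = U Σ Vᵀ` be an SVD (`Uᵀ U = I`, `V` orthogonal,
`Σ = diagonal σ`) with all singular values `σ i ∈ (0, √3)`.  Then every Björck iterate has
the same singular vectors with singular values transformed by `g(σ) = σ(3-σ²)/2`, the
singular values converge to `1`, the iteration converges to `U Vᵀ`, which has orthonormal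
columns and is the nearest matrix with orthonormal columns to `W` (in the Frobenius
distance). -/
theorem bjorck_convergence
    (m nn : ℕ) (W : Matrix (Fin m) (Fin nn) ℝ)
    (U : Matrix (Fin m) (Fin nn) ℝ) (V : Matrix (Fin nn) (Fin nn) ℝ)
    (σ : Fin nn → ℝ)
    (hU : Uᵀ * U = 1) (hV : Vᵀ * V = 1) (hV' : V * Vᵀ = 1)
    (hσ : ∀ i, σ i ∈ Set.Ioo (0 : ℝ) (Real.sqrt 3))
    (hSVD : W = U * Matrix.diagonal σ * Vᵀ) :
    (∀ k, bjorck m nn W k = U * Matrix.diagonal (fun i => g^[k] (σ i)) * Vᵀ)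
      ∧ (∀ i, Tendsto (fun k => g^[k] (σ i)) atTop (nhds 1))
      ∧ Tendsto (fun k => bjorck m nn W k) atTop (nhds (U * Vᵀ))
      ∧ (U * Vᵀ)ᵀ * (U * Vᵀ) = 1
      ∧ (∀ Q : Matrix (Fin m) (Fin nn) ℝ, Qᵀ * Q = 1 →
          ∑ i, ∑ j, (W i j - (U * Vᵀ) i j) ^ 2 ≤ ∑ i, ∑ j, (W i j - Q i j) ^ 2) := by
  -- part 1
  have h1 : ∀ k, bjorck m nn W k = U * Matrix.diagonal (fun i => g^[k] (σ i)) * Vᵀ := by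
    intro k
    induction k with
    | zero => simpa [bjorck] using hSVD
    | succ n ih =>
        show bjorck m nn W n * _ = _
        rw [ih, step_eq U V hU hV]
        simp only [Function.iterate_succ_apply']
  -- part 2
  have h2 : ∀ i, Tendsto (fun k => g^[k] (σ i)) atTop (nhds 1) := fun i =>
    tendsto_iter_one' (hσ i).1 (hσ i).2
  -- part 4
  have h4 : (U * Vᵀ)ᵀ * (U * Vᵀ) = 1 := by
    rw [transpose_mul, transpose_transpose, Matrix.mul_assoc, ← Matrix.mul_assoc Uᵀ, hU,
      Matrix.one_mul, hV']
  -- part 3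
  have hD : Tendsto (fun k => (Matrix.diagonal (fun i => g^[k] (σ i)) :
      Matrix (Fin nn) (Fin nn) ℝ)) atTop (nhds 1) := by
    refine tendsto_pi_nhds.mpr ?_
    intro i
    refine tendsto_pi_nhds.mpr ?_
    intro j
    rcases eq_or_ne i j with rfl | h
    · simp only [Matrix.diagonal_apply_eq, Matrix.one_apply_eq]
      exact h2 i
    · simpa [Matrix.diagonal_apply_ne _ h, Matrix.one_apply_ne h] using
        (tendsto_const_nhds : Tendsto (fun _ : ℕ => (0:ℝ)) atTop (nhds 0))
  have hcont : Continuous fun M : Matrix (Fin nn) (Fin nn) ℝ => U * M * Vᵀ :=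
    (continuous_const.matrix_mul continuous_id).matrix_mul continuous_const
  have h3 : Tendsto (fun k => bjorck m nn W k) atTop (nhds (U * Vᵀ)) := by
    have := (hcont.tendsto 1).comp hD
    simp only [Function.comp, Matrix.mul_one] at this
    exact this.congr fun k => (h1 k).symm
  refine ⟨h1, h2, h3, h4, ?_⟩
  -- part 5
  intro Q hQ
  set P := U * Vᵀ with hP
  have expand : ∀ A : Matrix (Fin m) (Fin nn) ℝ, Aᵀ * A = 1 →
      ∑ i, ∑ j, (W i j - A i j) ^ 2
        = (∑ i, ∑ j, W i j ^ 2) + (nn : ℝ) - 2 * ∑ i, ∑ j, W i j * A i j := by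
    intro A hA
    have : ∀ i j, (W i j - A i j) ^ 2 = W i j ^ 2 + A i j ^ 2 - 2 * (W i j * A i j) := by
      intro i j; ring
    simp only [this, Finset.sum_sub_distrib, Finset.sum_add_distrib, ← Finset.mul_sum]
    rw [sum_sq_of_orth A hA]
  rw [expand P h4, expand Q hQ]
  have key : ∑ i, ∑ j, W i j * Q i j ≤ ∑ i, ∑ j, W i j * P i j := by
    -- rewrite both as traces
    have htr : ∀ A : Matrix (Fin m) (Fin nn) ℝ,
        ∑ i, ∑ j, W i j * A i j = ∑ i, σ i * (Uᵀ * A * V) i i := by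
      intro A
      have e1 : ∑ i, ∑ j, W i j * A i j = Matrix.trace (Wᵀ * A) := by
        rw [Finset.sum_comm]
        simp [Matrix.trace, Matrix.diag, Matrix.mul_apply]
      have e2 : Wᵀ * A = V * (Matrix.diagonal σ * (Uᵀ * A)) := by
        rw [hSVD]
        simp only [transpose_mul, diagonal_transpose, transpose_transpose, Matrix.mul_assoc]
      rw [e1, e2, Matrix.trace_mul_comm]
      have e3 : Matrix.diagonal σ * (Uᵀ * A) * V = Matrix.diagonal σ * (Uᵀ * A * V) := by
        simp only [Matrix.mul_assoc]
      rw [e3]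
      simp [Matrix.trace, Matrix.diag, Matrix.diagonal_mul]
    rw [htr Q, htr P]
    have hPid : Uᵀ * P * V = 1 := by
      rw [hP, ← Matrix.mul_assoc, hU, Matrix.one_mul, hV]
    have hQdiag : ∀ i, (Uᵀ * Q * V) i i ≤ 1 := by
      intro i
      have hM : (Q * V)ᵀ * (Q * V) = 1 := by
        rw [transpose_mul, Matrix.mul_assoc, ← Matrix.mul_assoc Qᵀ, hQ, Matrix.one_mul, hV]
      have hUcol : ∑ l, U l i ^ 2 = 1 := by
        have := congrArg (fun M => M i i) hU
        simpa [Matrix.mul_apply, sq] using this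
      have hMcol : ∑ l, (Q * V) l i ^ 2 = 1 := by
        have := congrArg (fun M => M i i) hM
        simpa [Matrix.mul_apply, sq, mul_comm] using this
      have entry : (Uᵀ * Q * V) i i = ∑ l, U l i * (Q * V) l i := by
        rw [Matrix.mul_assoc]
        simp [Matrix.mul_apply]
      rw [entry]
      calc ∑ l, U l i * (Q * V) l i
          ≤ ∑ l, (U l i ^ 2 / 2 + (Q * V) l i ^ 2 / 2) := by
            apply Finset.sum_le_sum
            intro l _
            nlinarith [sq_nonneg (U l i - (Q * V) l i)]
        _ = 1 := by
            rw [Finset.sum_add_distrib, ← Finset.sum_div, ← Finset.sum_div, hUcol, hMcol]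
            norm_num
    rw [hPid]
    apply Finset.sum_le_sum
    intro i _
    have := (hσ i).1
    calc σ i * (Uᵀ * Q * V) i i ≤ σ i * 1 :=
          mul_le_mul_of_nonneg_left (hQdiag i) this.le
      _ = σ i * (1 : Matrix (Fin nn) (Fin nn) ℝ) i i := by simp
  linarith

end Stmt16
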